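/- Let n ≥ 8. Suppose there exists a weighted spherical t-design of generalized corner-vector type on S^{n-1} given by data (a_i, s_i, W_i), i = 1,...,k, such that s_i ∈ {0,1,2} for every index i. Then t ≤ 7. -/

import Mathlib

open MeasureTheory

/-- The generalized corner vector `v_{a,s} = (a^2+s)^{-1/2} (a,1,...,1,0,...,0)`
(with `s` ones after the first coordinate `a`) in `ℝ^n`. -/
noncomputable def cornerVec (n : ℕ) (a : ℝ) (s : ℕ) : EuclideanSpace ℝ (Fin n) :=
  WithLp.toLp 2 fun i => (Real.sqrt (a ^ 2 + s))⁻¹ *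
    (if (i : ℕ) = 0 then a else if (i : ℕ) ≤ s then 1 else 0)

/-- The orbit `v_{a,s}^{B_n}` of the generalized corner vector under the
hyperoctahedral group (coordinate permutations and sign changes). -/
noncomputable def cornerOrbit (n : ℕ) (a : ℝ) (s : ℕ) : Finset (EuclideanSpace ℝ (Fin n)) :=
  @Finset.image _ _ (Classical.decEq _)
    (fun p : Equiv.Perm (Fin n) × (Fin n → Bool) =>
      (WithLp.toLp 2 fun i => (if p.2 i then (-1 : ℝ) else 1) * cornerVec n a s (p.1 i) :
        EuclideanSpace ℝ (Fin n)))
    Finset.univ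

/-- The average `(1/|S^{n-1}|) ∫_{S^{n-1}} f dρ` of a polynomial over the unit sphere,
with respect to the surface ((n-1)-dimensional Hausdorff) measure. -/
noncomputable def sphereAvg (n : ℕ) (f : MvPolynomial (Fin n) ℝ) : ℝ :=
  ⨍ x in Metric.sphere (0 : EuclideanSpace ℝ (Fin n)) 1,
    MvPolynomial.eval (fun i => x i) f ∂ μH[(n : ℝ) - 1]

/-- The sum `Σ_{x ∈ v_{a,s}^{B_n}} f(x)`. -/
noncomputable def orbitSum (n : ℕ) (a : ℝ) (s : ℕ) (f : MvPolynomial (Fin n) ℝ) : ℝ :=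
  ∑ y ∈ cornerOrbit n a s, MvPolynomial.eval (fun i => y i) f

/-- A weighted spherical `t`-design of generalized corner-vector type on `S^{n-1}`:
the spherical average of every polynomial of total degree at most `t` equals the
weighted sum over the orbits `v_{a_i,s_i}^{B_n}` with weights `W_i`. -/
def isDesign (n t k : ℕ) (a : Fin k → ℝ) (s : Fin k → ℕ) (W : Fin k → ℝ) : Prop :=
  ∀ f : MvPolynomial (Fin n) ℝ, f.totalDegree ≤ t →
    sphereAvg n f = ∑ i, W i * orbitSum n (a i) (s i) f

/-! ### Auxiliary: the 45° rotation in the (0,1) and (2,3) coordinate planes -/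

noncomputable def rotFun (n : ℕ) (hn : 8 ≤ n) (x : EuclideanSpace ℝ (Fin n)) :
    EuclideanSpace ℝ (Fin n) := WithLp.toLp 2 fun i =>
  if (i : ℕ) = 0 then (x ⟨0, by omega⟩ + x ⟨1, by omega⟩) / Real.sqrt 2
  else if (i : ℕ) = 1 then (x ⟨0, by omega⟩ - x ⟨1, by omega⟩) / Real.sqrt 2
  else if (i : ℕ) = 2 then (x ⟨2, by omega⟩ + x ⟨3, by omega⟩) / Real.sqrt 2
  else if (i : ℕ) = 3 then (x ⟨2, by omega⟩ - x ⟨3, by omega⟩) / Real.sqrt 2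
  else x i

lemma rotFun_apply0 (n : ℕ) (hn : 8 ≤ n) (x : EuclideanSpace ℝ (Fin n)) :
    rotFun n hn x ⟨0, by omega⟩ = (x ⟨0, by omega⟩ + x ⟨1, by omega⟩) / Real.sqrt 2 := by
  simp [rotFun]

lemma rotFun_apply1 (n : ℕ) (hn : 8 ≤ n) (x : EuclideanSpace ℝ (Fin n)) :
    rotFun n hn x ⟨1, by omega⟩ = (x ⟨0, by omega⟩ - x ⟨1, by omega⟩) / Real.sqrt 2 := by
  simp [rotFun]

lemma rotFun_apply2 (n : ℕ) (hn : 8 ≤ n) (x : EuclideanSpace ℝ (Fin n)) :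
    rotFun n hn x ⟨2, by omega⟩ = (x ⟨2, by omega⟩ + x ⟨3, by omega⟩) / Real.sqrt 2 := by
  simp [rotFun]

lemma rotFun_apply3 (n : ℕ) (hn : 8 ≤ n) (x : EuclideanSpace ℝ (Fin n)) :
    rotFun n hn x ⟨3, by omega⟩ = (x ⟨2, by omega⟩ - x ⟨3, by omega⟩) / Real.sqrt 2 := by
  simp [rotFun]

lemma rotFun_involutive (n : ℕ) (hn : 8 ≤ n) : Function.Involutive (rotFun n hn) := by
  intro x
  ext i
  have h2 : Real.sqrt 2 ≠ 0 := by positivity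
  have hs : Real.sqrt 2 * Real.sqrt 2 = 2 := Real.mul_self_sqrt (by norm_num)
  rcases eq_or_ne (i : ℕ) 0 with h0 | h0
  · have hi : i = (⟨0, by omega⟩ : Fin n) := Fin.ext h0
    rw [hi, rotFun_apply0, rotFun_apply0, rotFun_apply1]
    field_simp
    rw [Real.sq_sqrt (by norm_num : (0:ℝ) ≤ 2)]; ring
  rcases eq_or_ne (i : ℕ) 1 with h1 | h1
  · have hi : i = (⟨1, by omega⟩ : Fin n) := Fin.ext h1
    rw [hi, rotFun_apply1, rotFun_apply0, rotFun_apply1]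
    field_simp
    rw [Real.sq_sqrt (by norm_num : (0:ℝ) ≤ 2)]; ring
  rcases eq_or_ne (i : ℕ) 2 with h2' | h2'
  · have hi : i = (⟨2, by omega⟩ : Fin n) := Fin.ext h2'
    rw [hi, rotFun_apply2, rotFun_apply2, rotFun_apply3]
    field_simp
    rw [Real.sq_sqrt (by norm_num : (0:ℝ) ≤ 2)]; ring
  rcases eq_or_ne (i : ℕ) 3 with h3 | h3
  · have hi : i = (⟨3, by omega⟩ : Fin n) := Fin.ext h3
    rw [hi, rotFun_apply3, rotFun_apply2, rotFun_apply3]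
    field_simp
    rw [Real.sq_sqrt (by norm_num : (0:ℝ) ≤ 2)]; ring
  · show rotFun n hn (rotFun n hn x) i = x i
    rw [show rotFun n hn (rotFun n hn x) i = rotFun n hn x i by
      simp only [rotFun, PiLp.toLp_apply, h0, h1, h2', h3, if_false]]
    simp only [rotFun, PiLp.toLp_apply, h0, h1, h2', h3, if_false]

lemma rotFun_sum_sq (n : ℕ) (hn : 8 ≤ n) (x y : EuclideanSpace ℝ (Fin n)) :
    ∑ i, (rotFun n hn x i - rotFun n hn y i) ^ 2 = ∑ i, (x i - y i) ^ 2 := by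
  classical
  have hs : Real.sqrt 2 * Real.sqrt 2 = 2 := Real.mul_self_sqrt (by norm_num)
  have h2 : Real.sqrt 2 ≠ 0 := by positivity
  set i0 : Fin n := ⟨0, by omega⟩
  set i1 : Fin n := ⟨1, by omega⟩
  set i2 : Fin n := ⟨2, by omega⟩
  set i3 : Fin n := ⟨3, by omega⟩
  have key : ∀ i ∈ Finset.univ, i ∉ ({i0, i1, i2, i3} : Finset (Fin n)) →
      (rotFun n hn x i - rotFun n hn y i) ^ 2 - (x i - y i) ^ 2 = 0 := by
    intro i _ hi
    simp only [Finset.mem_insert, Finset.mem_singleton, not_or] at hi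
    obtain ⟨n0, n1, n2, n3⟩ := hi
    have h0 : (i : ℕ) ≠ 0 := fun h => n0 (Fin.ext h)
    have h1 : (i : ℕ) ≠ 1 := fun h => n1 (Fin.ext h)
    have h2' : (i : ℕ) ≠ 2 := fun h => n2 (Fin.ext h)
    have h3 : (i : ℕ) ≠ 3 := fun h => n3 (Fin.ext h)
    simp only [rotFun, PiLp.toLp_apply, h0, h1, h2', h3, if_false]
    ring
  have hsub : ∑ i ∈ ({i0, i1, i2, i3} : Finset (Fin n)),
      ((rotFun n hn x i - rotFun n hn y i) ^ 2 - (x i - y i) ^ 2) =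
      ∑ i, ((rotFun n hn x i - rotFun n hn y i) ^ 2 - (x i - y i) ^ 2) :=
    Finset.sum_subset (Finset.subset_univ _) key
  have hd01 : i0 ≠ i1 := by simp [i0, i1, Fin.ext_iff]
  have hd02 : i0 ≠ i2 := by simp [i0, i2, Fin.ext_iff]
  have hd03 : i0 ≠ i3 := by simp [i0, i3, Fin.ext_iff]
  have hd12 : i1 ≠ i2 := by simp [i1, i2, Fin.ext_iff]
  have hd13 : i1 ≠ i3 := by simp [i1, i3, Fin.ext_iff]
  have hd23 : i2 ≠ i3 := by simp [i2, i3, Fin.ext_iff]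
  have hzero : ∑ i ∈ ({i0, i1, i2, i3} : Finset (Fin n)),
      ((rotFun n hn x i - rotFun n hn y i) ^ 2 - (x i - y i) ^ 2) = 0 := by
    rw [Finset.sum_insert (by simp [hd01, hd02, hd03]),
        Finset.sum_insert (by simp [hd12, hd13]),
        Finset.sum_insert (by simp [hd23]), Finset.sum_singleton]
    rw [rotFun_apply0 n hn x, rotFun_apply1 n hn x, rotFun_apply2 n hn x,
        rotFun_apply3 n hn x, rotFun_apply0 n hn y, rotFun_apply1 n hn y,
        rotFun_apply2 n hn y, rotFun_apply3 n hn y]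
    field_simp
    simp only [i0, i1, i2, i3]
    rw [Real.sq_sqrt (by norm_num : (0:ℝ) ≤ 2)]
    ring
  have := hsub.symm.trans hzero
  rw [Finset.sum_sub_distrib] at this
  linarith

noncomputable def rotIso (n : ℕ) (hn : 8 ≤ n) :
    EuclideanSpace ℝ (Fin n) ≃ᵢ EuclideanSpace ℝ (Fin n) where
  toEquiv := Function.Involutive.toPerm _ (rotFun_involutive n hn)
  isometry_toFun := Isometry.of_dist_eq fun x y => by
    show dist (rotFun n hn x) (rotFun n hn y) = dist x y
    rw [EuclideanSpace.dist_eq, EuclideanSpace.dist_eq]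
    congr 1
    simpa [Real.dist_eq, sq_abs] using rotFun_sum_sq n hn x y

lemma rotIso_apply (n : ℕ) (hn : 8 ≤ n) (x : EuclideanSpace ℝ (Fin n)) :
    rotIso n hn x = rotFun n hn x := rfl

lemma rotFun_zero (n : ℕ) (hn : 8 ≤ n) : rotFun n hn (0 : EuclideanSpace ℝ (Fin n)) = 0 := by
  ext i
  show rotFun n hn 0 i = (0 : EuclideanSpace ℝ (Fin n)) i
  have hz : ∀ j : Fin n, (0 : EuclideanSpace ℝ (Fin n)) j = 0 := fun _ => rfl
  simp [rotFun, hz]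

lemma sphereAvg_rot (n : ℕ) (hn : 8 ≤ n) (f g : MvPolynomial (Fin n) ℝ)
    (hfg : ∀ x : EuclideanSpace ℝ (Fin n),
      MvPolynomial.eval (fun i => rotFun n hn x i) f = MvPolynomial.eval (fun i => x i) g) :
    sphereAvg n g = sphereAvg n f := by
  classical
  set μ : Measure (EuclideanSpace ℝ (Fin n)) := μH[(n : ℝ) - 1] with hμ
  set S := Metric.sphere (0 : EuclideanSpace ℝ (Fin n)) 1 with hS
  set e := rotIso n hn with he
  have hpre : e ⁻¹' S = S := by
    ext x
    simp only [Set.mem_preimage, hS, Metric.mem_sphere]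
    have h0 : e 0 = (0 : EuclideanSpace ℝ (Fin n)) := by
      rw [he, rotIso_apply, rotFun_zero]
    have : dist (e x) 0 = dist x 0 := by
      conv_lhs => rw [← h0]
      exact e.isometry.dist_eq x 0
    rw [this]
  have hmap : Measure.map e μ = μ := e.map_hausdorffMeasure _
  have hme : MeasurableEmbedding (e : EuclideanSpace ℝ (Fin n) → EuclideanSpace ℝ (Fin n)) :=
    e.toHomeomorph.measurableEmbedding
  have hint : ∫ x in S, MvPolynomial.eval (fun i => x i) f ∂μ
      = ∫ x in S, MvPolynomial.eval (fun i => x i) g ∂μ := by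
    calc ∫ x in S, MvPolynomial.eval (fun i => x i) f ∂μ
        = ∫ x in S, MvPolynomial.eval (fun i => x i) f ∂(Measure.map e μ) := by rw [hmap]
      _ = ∫ x in e ⁻¹' S, MvPolynomial.eval (fun i => e x i) f ∂μ :=
          hme.setIntegral_map (fun y => MvPolynomial.eval (fun i => y i) f) S
      _ = ∫ x in S, MvPolynomial.eval (fun i => x i) g ∂μ := by
          rw [hpre]
          refine setIntegral_congr_fun (Metric.isClosed_sphere.measurableSet) ?_
          intro x _
          have := hfg x
          rw [← rotIso_apply n hn x] at this
          exact this
  unfold sphereAvg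
  rw [setAverage_eq, setAverage_eq, ← hμ, ← hS, hint]

/-! ### Orbit lemmas -/

lemma mem_cornerOrbit_iff {n : ℕ} {a : ℝ} {s : ℕ} {y : EuclideanSpace ℝ (Fin n)} :
    y ∈ cornerOrbit n a s ↔ ∃ p : Equiv.Perm (Fin n) × (Fin n → Bool),
      (WithLp.toLp 2 fun i => (if p.2 i then (-1 : ℝ) else 1) * cornerVec n a s (p.1 i) :
        EuclideanSpace ℝ (Fin n)) = y := by
  rw [cornerOrbit, @Finset.mem_image _ _ (Classical.decEq _)]
  simp only [Finset.mem_univ, true_and]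

lemma cornerVec_zero_of_gt {n : ℕ} {a : ℝ} {s : ℕ} {j : Fin n} (h : s < (j : ℕ)) :
    cornerVec n a s j = 0 := by
  have h0 : (j : ℕ) ≠ 0 := by omega
  have h1 : ¬ (j : ℕ) ≤ s := by omega
  simp [cornerVec, h0, h1]

lemma cornerVec_le_of_ne_zero {n : ℕ} {a : ℝ} {s : ℕ} {j : Fin n}
    (h : cornerVec n a s j ≠ 0) : (j : ℕ) ≤ s := by
  by_contra hc
  exact h (cornerVec_zero_of_gt (by omega))

/-! ### The test polynomials -/

open MvPolynomial in
noncomputable def P8 (n : ℕ) (hn : 8 ≤ n) : MvPolynomial (Fin n) ℝ :=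
  (X ⟨0, by omega⟩ ^ 2 - X ⟨1, by omega⟩ ^ 2) ^ 2 *
  (X ⟨2, by omega⟩ ^ 2 - X ⟨3, by omega⟩ ^ 2) ^ 2

open MvPolynomial in
noncomputable def Q8 (n : ℕ) (hn : 8 ≤ n) : MvPolynomial (Fin n) ℝ :=
  C 16 * (X ⟨0, by omega⟩ * X ⟨1, by omega⟩ * X ⟨2, by omega⟩ * X ⟨3, by omega⟩) ^ 2

open MvPolynomial in
noncomputable def P4 (n : ℕ) (hn : 8 ≤ n) : MvPolynomial (Fin n) ℝ :=
  (X ⟨0, by omega⟩ ^ 2 - X ⟨1, by omega⟩ ^ 2) ^ 2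

open MvPolynomial in
noncomputable def Q4 (n : ℕ) (hn : 8 ≤ n) : MvPolynomial (Fin n) ℝ :=
  C 4 * (X ⟨0, by omega⟩ * X ⟨1, by omega⟩) ^ 2

lemma eval_P8 {n : ℕ} (hn : 8 ≤ n) (x : Fin n → ℝ) :
    MvPolynomial.eval x (P8 n hn) =
      (x ⟨0, by omega⟩ ^ 2 - x ⟨1, by omega⟩ ^ 2) ^ 2 *
      (x ⟨2, by omega⟩ ^ 2 - x ⟨3, by omega⟩ ^ 2) ^ 2 := by
  simp [P8]

lemma eval_Q8 {n : ℕ} (hn : 8 ≤ n) (x : Fin n → ℝ) :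
    MvPolynomial.eval x (Q8 n hn) =
      16 * (x ⟨0, by omega⟩ * x ⟨1, by omega⟩ * x ⟨2, by omega⟩ * x ⟨3, by omega⟩) ^ 2 := by
  simp [Q8]

lemma eval_P4 {n : ℕ} (hn : 8 ≤ n) (x : Fin n → ℝ) :
    MvPolynomial.eval x (P4 n hn) = (x ⟨0, by omega⟩ ^ 2 - x ⟨1, by omega⟩ ^ 2) ^ 2 := by
  simp [P4]

lemma eval_Q4 {n : ℕ} (hn : 8 ≤ n) (x : Fin n → ℝ) :
    MvPolynomial.eval x (Q4 n hn) = 4 * (x ⟨0, by omega⟩ * x ⟨1, by omega⟩) ^ 2 := by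
  simp [Q4]

open MvPolynomial in
lemma diff_sq_totalDegree {n : ℕ} (i j : Fin n) :
    ((X i ^ 2 - X j ^ 2 : MvPolynomial (Fin n) ℝ)).totalDegree ≤ 2 := by
  have h : (X i ^ 2 - X j ^ 2 : MvPolynomial (Fin n) ℝ) = X i ^ 2 + (-(X j ^ 2)) := by ring
  rw [h]
  refine le_trans (totalDegree_add _ _) ?_
  rw [totalDegree_neg, totalDegree_X_pow, totalDegree_X_pow]
  simp

open MvPolynomial in
lemma P8_totalDegree {n : ℕ} (hn : 8 ≤ n) : (P8 n hn).totalDegree ≤ 8 := by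
  refine le_trans (totalDegree_mul _ _) ?_
  have h1 := totalDegree_pow (X (⟨0, by omega⟩ : Fin n) ^ 2 - X ⟨1, by omega⟩ ^ 2 :
    MvPolynomial (Fin n) ℝ) 2
  have h2 := totalDegree_pow (X (⟨2, by omega⟩ : Fin n) ^ 2 - X ⟨3, by omega⟩ ^ 2 :
    MvPolynomial (Fin n) ℝ) 2
  have g1 := diff_sq_totalDegree (⟨0, by omega⟩ : Fin n) ⟨1, by omega⟩
  have g2 := diff_sq_totalDegree (⟨2, by omega⟩ : Fin n) ⟨3, by omega⟩
  omega

open MvPolynomial in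
lemma Q8_totalDegree {n : ℕ} (hn : 8 ≤ n) : (Q8 n hn).totalDegree ≤ 8 := by
  refine le_trans (totalDegree_mul _ _) ?_
  rw [totalDegree_C]
  have h := totalDegree_pow (X (⟨0, by omega⟩ : Fin n) * X ⟨1, by omega⟩ * X ⟨2, by omega⟩ *
    X ⟨3, by omega⟩ : MvPolynomial (Fin n) ℝ) 2
  have g : (X (⟨0, by omega⟩ : Fin n) * X ⟨1, by omega⟩ * X ⟨2, by omega⟩ *
      X ⟨3, by omega⟩ : MvPolynomial (Fin n) ℝ).totalDegree ≤ 4 := by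
    refine le_trans (totalDegree_mul _ _) ?_
    refine le_trans (add_le_add (totalDegree_mul _ _) le_rfl) ?_
    refine le_trans (add_le_add (add_le_add (totalDegree_mul _ _) le_rfl) le_rfl) ?_
    simp [totalDegree_X]
  omega

open MvPolynomial in
lemma P4_totalDegree {n : ℕ} (hn : 8 ≤ n) : (P4 n hn).totalDegree ≤ 4 := by
  have h := totalDegree_pow (X (⟨0, by omega⟩ : Fin n) ^ 2 - X ⟨1, by omega⟩ ^ 2 :
    MvPolynomial (Fin n) ℝ) 2
  have g := diff_sq_totalDegree (⟨0, by omega⟩ : Fin n) ⟨1, by omega⟩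
  unfold P4
  omega

open MvPolynomial in
lemma Q4_totalDegree {n : ℕ} (hn : 8 ≤ n) : (Q4 n hn).totalDegree ≤ 4 := by
  refine le_trans (totalDegree_mul _ _) ?_
  rw [totalDegree_C]
  have h := totalDegree_pow (X (⟨0, by omega⟩ : Fin n) * X ⟨1, by omega⟩ :
    MvPolynomial (Fin n) ℝ) 2
  have g : (X (⟨0, by omega⟩ : Fin n) * X ⟨1, by omega⟩ :
      MvPolynomial (Fin n) ℝ).totalDegree ≤ 2 := by
    refine le_trans (totalDegree_mul _ _) ?_
    simp [totalDegree_X]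
  omega

/-! ### Pointwise rotation identities -/

lemma rot_sq_diff (u v : ℝ) :
    ((u + v) / Real.sqrt 2) ^ 2 - ((u - v) / Real.sqrt 2) ^ 2 = 2 * (u * v) := by
  rw [div_pow, div_pow, Real.sq_sqrt (by norm_num : (0:ℝ) ≤ 2)]
  ring

lemma evalP8_rot {n : ℕ} (hn : 8 ≤ n) (x : EuclideanSpace ℝ (Fin n)) :
    MvPolynomial.eval (fun i => rotFun n hn x i) (P8 n hn) =
      MvPolynomial.eval (fun i => x i) (Q8 n hn) := by
  rw [eval_P8 hn, eval_Q8 hn]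
  show (rotFun n hn x ⟨0, by omega⟩ ^ 2 - rotFun n hn x ⟨1, by omega⟩ ^ 2) ^ 2 *
      (rotFun n hn x ⟨2, by omega⟩ ^ 2 - rotFun n hn x ⟨3, by omega⟩ ^ 2) ^ 2 = _
  rw [rotFun_apply0, rotFun_apply1, rotFun_apply2, rotFun_apply3,
    rot_sq_diff, rot_sq_diff]
  ring

lemma evalP4_rot {n : ℕ} (hn : 8 ≤ n) (x : EuclideanSpace ℝ (Fin n)) :
    MvPolynomial.eval (fun i => rotFun n hn x i) (P4 n hn) =
      MvPolynomial.eval (fun i => x i) (Q4 n hn) := by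
  rw [eval_P4 hn, eval_Q4 hn]
  show (rotFun n hn x ⟨0, by omega⟩ ^ 2 - rotFun n hn x ⟨1, by omega⟩ ^ 2) ^ 2 = _
  rw [rotFun_apply0, rotFun_apply1, rot_sq_diff]
  ring

/-! ### Orbit sums of the rotated polynomials vanish -/

lemma orbit_eval_Q8_zero {n : ℕ} (hn : 8 ≤ n) {a : ℝ} {s : ℕ} (hs : s ≤ 2)
    {y : EuclideanSpace ℝ (Fin n)} (hy : y ∈ cornerOrbit n a s) :
    MvPolynomial.eval (fun i => y i) (Q8 n hn) = 0 := by
  obtain ⟨p, hp⟩ := mem_cornerOrbit_iff.mp hy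
  rw [eval_Q8 hn]
  suffices h : y ⟨0, by omega⟩ * y ⟨1, by omega⟩ * y ⟨2, by omega⟩ * y ⟨3, by omega⟩ = 0 by
    rw [h]; norm_num
  by_contra hne
  have hy' : ∀ m : Fin n, y m = (if p.2 m then (-1 : ℝ) else 1) * cornerVec n a s (p.1 m) :=
    fun m => (congrArg (fun z : EuclideanSpace ℝ (Fin n) => z m) hp).symm
  have hfac : ∀ m : Fin n, y m ≠ 0 → (p.1 m : ℕ) ≤ s := by
    intro m hm
    rw [hy' m] at hm
    exact cornerVec_le_of_ne_zero (right_ne_zero_of_mul hm)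
  have h0 : y ⟨0, by omega⟩ ≠ 0 := fun h => hne (by rw [h]; ring)
  have h1 : y ⟨1, by omega⟩ ≠ 0 := fun h => hne (by rw [h]; ring)
  have h2 : y ⟨2, by omega⟩ ≠ 0 := fun h => hne (by rw [h]; ring)
  have h3 : y ⟨3, by omega⟩ ≠ 0 := fun h => hne (by rw [h]; ring)
  have c0 := hfac _ h0
  have c1 := hfac _ h1
  have c2 := hfac _ h2
  have c3 := hfac _ h3
  have d01 : (p.1 ⟨0, by omega⟩ : ℕ) ≠ (p.1 ⟨1, by omega⟩ : ℕ) := fun h =>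
    absurd (p.1.injective (Fin.ext h)) (by simp [Fin.ext_iff])
  have d02 : (p.1 ⟨0, by omega⟩ : ℕ) ≠ (p.1 ⟨2, by omega⟩ : ℕ) := fun h =>
    absurd (p.1.injective (Fin.ext h)) (by simp [Fin.ext_iff])
  have d03 : (p.1 ⟨0, by omega⟩ : ℕ) ≠ (p.1 ⟨3, by omega⟩ : ℕ) := fun h =>
    absurd (p.1.injective (Fin.ext h)) (by simp [Fin.ext_iff])
  have d12 : (p.1 ⟨1, by omega⟩ : ℕ) ≠ (p.1 ⟨2, by omega⟩ : ℕ) := fun h =>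
    absurd (p.1.injective (Fin.ext h)) (by simp [Fin.ext_iff])
  have d13 : (p.1 ⟨1, by omega⟩ : ℕ) ≠ (p.1 ⟨3, by omega⟩ : ℕ) := fun h =>
    absurd (p.1.injective (Fin.ext h)) (by simp [Fin.ext_iff])
  have d23 : (p.1 ⟨2, by omega⟩ : ℕ) ≠ (p.1 ⟨3, by omega⟩ : ℕ) := fun h =>
    absurd (p.1.injective (Fin.ext h)) (by simp [Fin.ext_iff])
  omega

lemma orbit_eval_Q4_zero {n : ℕ} (hn : 8 ≤ n) {a : ℝ}
    {y : EuclideanSpace ℝ (Fin n)} (hy : y ∈ cornerOrbit n a 0) :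
    MvPolynomial.eval (fun i => y i) (Q4 n hn) = 0 := by
  obtain ⟨p, hp⟩ := mem_cornerOrbit_iff.mp hy
  rw [eval_Q4 hn]
  suffices h : y ⟨0, by omega⟩ * y ⟨1, by omega⟩ = 0 by
    rw [h]; norm_num
  by_contra hne
  have hy' : ∀ m : Fin n, y m = (if p.2 m then (-1 : ℝ) else 1) * cornerVec n a 0 (p.1 m) :=
    fun m => (congrArg (fun z : EuclideanSpace ℝ (Fin n) => z m) hp).symm
  have hfac : ∀ m : Fin n, y m ≠ 0 → (p.1 m : ℕ) ≤ 0 := by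
    intro m hm
    rw [hy' m] at hm
    exact cornerVec_le_of_ne_zero (right_ne_zero_of_mul hm)
  have h0 : y ⟨0, by omega⟩ ≠ 0 := fun h => hne (by rw [h]; ring)
  have h1 : y ⟨1, by omega⟩ ≠ 0 := fun h => hne (by rw [h]; ring)
  have c0 := hfac _ h0
  have c1 := hfac _ h1
  have d01 : (p.1 ⟨0, by omega⟩ : ℕ) ≠ (p.1 ⟨1, by omega⟩ : ℕ) := fun h =>
    absurd (p.1.injective (Fin.ext h)) (by simp [Fin.ext_iff])
  omega

lemma P8_orbit_witness {n : ℕ} (hn : 8 ≤ n) {a : ℝ} {s : ℕ} (ha : 0 < a)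
    (hs1 : 1 ≤ s) (hs2 : s ≤ 2) :
    ∃ y ∈ cornerOrbit n a s, MvPolynomial.eval (fun j => y j) (P8 n hn) ≠ 0 := by
  obtain ⟨i0, hval0⟩ : ∃ j : Fin n, (j : ℕ) = 0 := ⟨⟨0, by omega⟩, rfl⟩
  obtain ⟨i1, hval1⟩ : ∃ j : Fin n, (j : ℕ) = 1 := ⟨⟨1, by omega⟩, rfl⟩
  obtain ⟨i2, hval2⟩ : ∃ j : Fin n, (j : ℕ) = 2 := ⟨⟨2, by omega⟩, rfl⟩
  obtain ⟨i3, hval3⟩ : ∃ j : Fin n, (j : ℕ) = 3 := ⟨⟨3, by omega⟩, rfl⟩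
  obtain ⟨i6, hval6⟩ : ∃ j : Fin n, (j : ℕ) = 6 := ⟨⟨6, by omega⟩, rfl⟩
  obtain ⟨i7, hval7⟩ : ∃ j : Fin n, (j : ℕ) = 7 := ⟨⟨7, by omega⟩, rfl⟩
  have h01 : i0 ≠ i1 := fun h => by rw [h] at hval0; omega
  have h02 : i0 ≠ i2 := fun h => by rw [h] at hval0; omega
  have h03 : i0 ≠ i3 := fun h => by rw [h] at hval0; omega
  have h06 : i0 ≠ i6 := fun h => by rw [h] at hval0; omega
  have h07 : i0 ≠ i7 := fun h => by rw [h] at hval0; omega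
  have h12 : i1 ≠ i2 := fun h => by rw [h] at hval1; omega
  have h13 : i1 ≠ i3 := fun h => by rw [h] at hval1; omega
  have h16 : i1 ≠ i6 := fun h => by rw [h] at hval1; omega
  have h17 : i1 ≠ i7 := fun h => by rw [h] at hval1; omega
  have h23 : i2 ≠ i3 := fun h => by rw [h] at hval2; omega
  have h26 : i2 ≠ i6 := fun h => by rw [h] at hval2; omega
  have h27 : i2 ≠ i7 := fun h => by rw [h] at hval2; omega
  have h36 : i3 ≠ i6 := fun h => by rw [h] at hval3; omega
  have h37 : i3 ≠ i7 := fun h => by rw [h] at hval3; omega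
  have h67 : i6 ≠ i7 := fun h => by rw [h] at hval6; omega
  set σ : Equiv.Perm (Fin n) :=
    ((Equiv.swap i1 i2).trans (Equiv.swap i2 i6)).trans (Equiv.swap i3 i7) with hσ
  have hσ0 : σ i0 = i0 := by
    simp only [hσ, Equiv.trans_apply]
    rw [Equiv.swap_apply_of_ne_of_ne h01 h02, Equiv.swap_apply_of_ne_of_ne h02 h06,
      Equiv.swap_apply_of_ne_of_ne h03 h07]
  have hσ1 : σ i1 = i6 := by
    simp only [hσ, Equiv.trans_apply]
    rw [Equiv.swap_apply_left, Equiv.swap_apply_left,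
      Equiv.swap_apply_of_ne_of_ne (Ne.symm h36) h67]
  have hσ2 : σ i2 = i1 := by
    simp only [hσ, Equiv.trans_apply]
    rw [Equiv.swap_apply_right, Equiv.swap_apply_of_ne_of_ne h12 h16,
      Equiv.swap_apply_of_ne_of_ne h13 h17]
  have hσ3 : σ i3 = i7 := by
    simp only [hσ, Equiv.trans_apply]
    rw [Equiv.swap_apply_of_ne_of_ne (Ne.symm h13) (Ne.symm h23),
      Equiv.swap_apply_of_ne_of_ne (Ne.symm h23) h36,
      Equiv.swap_apply_left]
  have e0 : (⟨0, by omega⟩ : Fin n) = i0 := Fin.ext hval0.symm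
  have e1 : (⟨1, by omega⟩ : Fin n) = i1 := Fin.ext hval1.symm
  have e2 : (⟨2, by omega⟩ : Fin n) = i2 := Fin.ext hval2.symm
  have e3 : (⟨3, by omega⟩ : Fin n) = i3 := Fin.ext hval3.symm
  refine ⟨_, mem_cornerOrbit_iff.mpr ⟨(σ, fun _ => false), rfl⟩, ?_⟩
  rw [eval_P8 hn]
  simp only [Bool.false_eq_true, if_false, one_mul]
  rw [e0, e1, e2, e3, hσ0, hσ1, hσ2, hσ3]
  have hv0 : cornerVec n a s i0 = (Real.sqrt (a ^ 2 + (s : ℝ)))⁻¹ * a := by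
    simp [cornerVec, hval0]
  have hv1 : cornerVec n a s i1 = (Real.sqrt (a ^ 2 + (s : ℝ)))⁻¹ * 1 := by
    simp [cornerVec, hval1, Nat.one_le_iff_ne_zero.mp hs1, hs1]
  have hv6 : cornerVec n a s i6 = 0 := cornerVec_zero_of_gt (by omega)
  have hv7 : cornerVec n a s i7 = 0 := cornerVec_zero_of_gt (by omega)
  rw [hv0, hv1, hv6, hv7]
  have hc : 0 < (Real.sqrt (a ^ 2 + (s : ℝ)))⁻¹ := by
    have h1 : (0 : ℝ) < a ^ 2 + (s : ℝ) := by positivity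
    exact inv_pos.mpr (Real.sqrt_pos.mpr h1)
  have hlt : (0:ℝ) < (((Real.sqrt (a ^ 2 + (s : ℝ)))⁻¹ * a) ^ 2 - 0 ^ 2) ^ 2 *
      (((Real.sqrt (a ^ 2 + (s : ℝ)))⁻¹ * 1) ^ 2 - 0 ^ 2) ^ 2 := by
    have e4 : (((Real.sqrt (a ^ 2 + (s : ℝ)))⁻¹ * a) ^ 2 - 0 ^ 2) ^ 2 *
        (((Real.sqrt (a ^ 2 + (s : ℝ)))⁻¹ * 1) ^ 2 - 0 ^ 2) ^ 2 =
        ((Real.sqrt (a ^ 2 + (s : ℝ)))⁻¹) ^ 8 * a ^ 4 := by ring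
    rw [e4]
    positivity
  exact ne_of_gt hlt

lemma P4_orbit_witness {n : ℕ} (hn : 8 ≤ n) {a : ℝ} (ha : 0 < a) :
    ∃ y ∈ cornerOrbit n a 0, MvPolynomial.eval (fun j => y j) (P4 n hn) ≠ 0 := by
  obtain ⟨i0, hval0⟩ : ∃ j : Fin n, (j : ℕ) = 0 := ⟨⟨0, by omega⟩, rfl⟩
  obtain ⟨i1, hval1⟩ : ∃ j : Fin n, (j : ℕ) = 1 := ⟨⟨1, by omega⟩, rfl⟩
  have e0 : (⟨0, by omega⟩ : Fin n) = i0 := Fin.ext hval0.symm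
  have e1 : (⟨1, by omega⟩ : Fin n) = i1 := Fin.ext hval1.symm
  refine ⟨_, mem_cornerOrbit_iff.mpr ⟨(Equiv.refl (Fin n), fun _ => false), rfl⟩, ?_⟩
  rw [eval_P4 hn]
  simp only [Bool.false_eq_true, if_false, one_mul, Equiv.refl_apply]
  rw [e0, e1]
  have hv0 : cornerVec n a 0 i0 = (Real.sqrt (a ^ 2 + ((0:ℕ) : ℝ)))⁻¹ * a := by
    simp [cornerVec, hval0]
  have hv1 : cornerVec n a 0 i1 = 0 := cornerVec_zero_of_gt (by omega)
  rw [hv0, hv1]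
  have hc : 0 < (Real.sqrt (a ^ 2 + ((0:ℕ) : ℝ)))⁻¹ := by
    have h1 : (0 : ℝ) < a ^ 2 + ((0:ℕ) : ℝ) := by positivity
    exact inv_pos.mpr (Real.sqrt_pos.mpr h1)
  have hlt : (0:ℝ) < (((Real.sqrt (a ^ 2 + ((0:ℕ) : ℝ)))⁻¹ * a) ^ 2 - 0 ^ 2) ^ 2 := by
    have e4 : (((Real.sqrt (a ^ 2 + ((0:ℕ) : ℝ)))⁻¹ * a) ^ 2 - 0 ^ 2) ^ 2 =
        ((Real.sqrt (a ^ 2 + ((0:ℕ) : ℝ)))⁻¹) ^ 4 * a ^ 4 := by ring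
    rw [e4]
    positivity
  exact ne_of_gt hlt

/-- If `n ≥ 8` and every `s_i ∈ {0,1,2}`, the degree is at most 7. -/
theorem degree_bound_of_small_s (n t k : ℕ) (hn : 8 ≤ n) (hk : 1 ≤ k)
    (a : Fin k → ℝ) (s : Fin k → ℕ) (W : Fin k → ℝ)
    (ha : ∀ i, 0 < a i) (hs : ∀ i, s i ≤ n - 1) (hW : ∀ i, 0 < W i)
    (hsmall : ∀ i, s i ≤ 2)
    (hd : isDesign n t k a s W) :
    t ≤ 7 := by
  by_contra hle
  push_neg at hle
  have ht : 8 ≤ t := hle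
  have main : ∀ P Q : MvPolynomial (Fin n) ℝ, P.totalDegree ≤ t → Q.totalDegree ≤ t →
      (∀ x : EuclideanSpace ℝ (Fin n),
        MvPolynomial.eval (fun i => rotFun n hn x i) P = MvPolynomial.eval (fun i => x i) Q) →
      (∀ (i : Fin k) (y : EuclideanSpace ℝ (Fin n)), y ∈ cornerOrbit n (a i) (s i) →
        MvPolynomial.eval (fun j => y j) Q = 0) →
      (∀ (y : EuclideanSpace ℝ (Fin n)), 0 ≤ MvPolynomial.eval (fun j => y j) P) →
      ∀ (i : Fin k), ∀ y ∈ cornerOrbit n (a i) (s i),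
        MvPolynomial.eval (fun j => y j) P = 0 := by
    intro P Q hdP hdQ hrotPQ hQzero hPnn
    have hQ : sphereAvg n Q = 0 := by
      rw [hd _ hdQ]
      refine Finset.sum_eq_zero fun i _ => ?_
      have : orbitSum n (a i) (s i) Q = 0 :=
        Finset.sum_eq_zero fun y hy => hQzero i y hy
      rw [this, mul_zero]
    have hrot : sphereAvg n Q = sphereAvg n P := sphereAvg_rot n hn _ _ hrotPQ
    have hsum0 : ∑ i, W i * orbitSum n (a i) (s i) P = 0 := by
      rw [← hd _ hdP, ← hrot, hQ]
    have horbnn : ∀ i : Fin k, 0 ≤ orbitSum n (a i) (s i) P :=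
      fun i => Finset.sum_nonneg fun y _ => hPnn y
    have hterm := (Finset.sum_eq_zero_iff_of_nonneg
      (fun i _ => mul_nonneg (hW i).le (horbnn i))).mp hsum0
    intro i y hy
    have h1 : orbitSum n (a i) (s i) P = 0 := by
      rcases mul_eq_zero.mp (hterm i (Finset.mem_univ i)) with h | h
      · exact absurd h (hW i).ne'
      · exact h
    exact (Finset.sum_eq_zero_iff_of_nonneg fun y _ => hPnn y).mp h1 y hy
  by_cases hcase : ∃ i, 1 ≤ s i
  · obtain ⟨i, hsi⟩ := hcase
    have hall := main (P8 n hn) (Q8 n hn) (le_trans (P8_totalDegree hn) ht)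
      (le_trans (Q8_totalDegree hn) ht) (evalP8_rot hn)
      (fun i y hy => orbit_eval_Q8_zero hn (hsmall i) hy)
      (fun y => by rw [eval_P8 hn]; positivity)
    obtain ⟨y, hymem, hyne⟩ := P8_orbit_witness hn (ha i) hsi (hsmall i)
    exact hyne (hall i y hymem)
  · push_neg at hcase
    have hzero : ∀ i, s i = 0 := fun i => by have := hcase i; omega
    have hall := main (P4 n hn) (Q4 n hn) (le_trans (P4_totalDegree hn) (by omega))
      (le_trans (Q4_totalDegree hn) (by omega)) (evalP4_rot hn)
      (fun i y hy => by
        rw [hzero i] at hy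
        exact orbit_eval_Q4_zero hn hy)
      (fun y => by rw [eval_P4 hn]; positivity)
    set ι : Fin k := ⟨0, hk⟩ with hι
    obtain ⟨y, hymem, hyne⟩ := P4_orbit_witness hn (ha ι)
    rw [← hzero ι] at hymem
    exact hyne (hall ι y hymem)
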